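/- Let n ≥ 4 and consider the equation over M₂(ℂ) with polynomial matrix diag((t−3)(t+3)(t−1)(t+1)^{n−3}, (t−4)(t+4)(t−2)(t+2)^{n−3}). This equation has exactly 16 solutions, all diagonalizable. -/

import Mathlib

open Polynomial Matrix

-- row evaluation lemma
lemma stmt17_vecMul_pow {X : Matrix (Fin 2) (Fin 2) ℂ} {w : Fin 2 → ℂ} {d : ℂ}
    (h : w ᵥ* X = d • w) (k : ℕ) : w ᵥ* (X ^ k) = d ^ k • w := by
  induction k with
  | zero => simp
  | succ k ih =>
      rw [pow_succ, ← vecMul_vecMul, ih, smul_vecMul, h, smul_smul, pow_succ]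

lemma stmt17_vecMul_aeval {X : Matrix (Fin 2) (Fin 2) ℂ} {w : Fin 2 → ℂ} {d : ℂ}
    (h : w ᵥ* X = d • w) (f : Polynomial ℂ) :
    w ᵥ* (aeval X f) = f.eval d • w := by
  induction f using Polynomial.induction_on' with
  | add p q hp hq => rw [map_add, vecMul_add, hp, hq, eval_add, add_smul]
  | monomial k a =>
      rw [aeval_monomial, eval_monomial]
      have h1 : (algebraMap ℂ (Matrix (Fin 2) (Fin 2) ℂ)) a * X ^ k = a • X ^ k := by
        rw [Algebra.algebraMap_eq_smul_one, smul_mul_assoc, one_mul]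
      rw [h1]
      have h2 : w ᵥ* (a • X ^ k) = a • (w ᵥ* (X ^ k)) := by
        ext j; simp [vecMul, dotProduct, Finset.mul_sum, mul_left_comm]; ring
      rw [h2, stmt17_vecMul_pow h, smul_smul]

lemma stmt17_row_aeval {X : Matrix (Fin 2) (Fin 2) ℂ} {i : Fin 2} {d : ℂ}
    (h : X i = d • (Pi.single i 1 : Fin 2 → ℂ)) (f : Polynomial ℂ) :
    (aeval X f) i = f.eval d • (Pi.single i 1 : Fin 2 → ℂ) := by
  have hw : (Pi.single i 1 : Fin 2 → ℂ) ᵥ* X = d • (Pi.single i 1 : Fin 2 → ℂ) := by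
    rw [single_one_vecMul]; exact h
  change (aeval X f).row i = _
  rw [← single_one_vecMul i (aeval X f), stmt17_vecMul_aeval hw]

lemma stmt17_exists_linear (X : Matrix (Fin 2) (Fin 2) ℂ) (f : Polynomial ℂ) :
    ∃ u v : ℂ, aeval X f = u • X + v • 1 := by
  have hM : X.charpoly.Monic := Matrix.charpoly_monic X
  have hd2 : X.charpoly.natDegree = 2 := by
    rw [Matrix.charpoly_natDegree_eq_dim]; simp
  have hne1 : X.charpoly ≠ 1 := by
    intro h; rw [h] at hd2; simp at hd2
  have hlt : (f %ₘ X.charpoly).natDegree ≤ 1 := by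
    have := Polynomial.natDegree_modByMonic_lt f hM hne1
    omega
  refine ⟨(f %ₘ X.charpoly).coeff 1, (f %ₘ X.charpoly).coeff 0, ?_⟩
  conv_lhs => rw [← Polynomial.modByMonic_add_div f X.charpoly]
  rw [map_add, _root_.map_mul, Matrix.aeval_self_charpoly, zero_mul, add_zero]
  conv_lhs => rw [Polynomial.eq_X_add_C_of_natDegree_le_one hlt]
  simp [Algebra.algebraMap_eq_smul_one, smul_mul_assoc]

lemma stmt17_coprime (m : ℕ) :
    IsCoprime ((X - C (3:ℂ)) * (X - C (-3)) * (X - C 1) * (X - C (-1)) ^ m)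
      ((X - C (4:ℂ)) * (X - C (-4)) * (X - C 2) * (X - C (-2)) ^ m) := by
  have base : ∀ a b : ℂ, a ≠ b → IsCoprime (X - C a) (X - C b) := fun a b hab =>
    Polynomial.isCoprime_X_sub_C_of_isUnit_sub ((sub_ne_zero.mpr hab).isUnit)
  have hp : ∀ b : ℂ, b ≠ 3 → b ≠ -3 → b ≠ 1 → b ≠ -1 →
      IsCoprime ((X - C (3:ℂ)) * (X - C (-3)) * (X - C 1) * (X - C (-1)) ^ m) (X - C b) := by
    intro b h1 h2 h3 h4
    exact (((base 3 b (Ne.symm h1)).mul_left (base (-3) b (Ne.symm h2))).mul_left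
      (base 1 b (Ne.symm h3))).mul_left ((base (-1) b (Ne.symm h4)).pow_left)
  exact (((hp 4 (by norm_num) (by norm_num) (by norm_num) (by norm_num)).mul_right
    (hp (-4) (by norm_num) (by norm_num) (by norm_num) (by norm_num))).mul_right
    (hp 2 (by norm_num) (by norm_num) (by norm_num) (by norm_num))).mul_right
    ((hp (-2) (by norm_num) (by norm_num) (by norm_num) (by norm_num)).pow_right)

lemma stmt17_monic (a b c e : ℂ) (m : ℕ) :
    ((X - C a) * (X - C b) * (X - C c) * (X - C e) ^ m).Monic :=
  (((monic_X_sub_C a).mul (monic_X_sub_C b)).mul (monic_X_sub_C c)).mul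
    ((monic_X_sub_C e).pow m)

lemma stmt17_natDegree (a b c e : ℂ) (m : ℕ) :
    ((X - C a) * (X - C b) * (X - C c) * (X - C e) ^ m).natDegree = 3 + m := by
  rw [Polynomial.Monic.natDegree_mul (((monic_X_sub_C a).mul (monic_X_sub_C b)).mul (monic_X_sub_C c)) ((monic_X_sub_C e).pow m),
    Polynomial.Monic.natDegree_mul ((monic_X_sub_C a).mul (monic_X_sub_C b)) (monic_X_sub_C c),
    Polynomial.Monic.natDegree_mul (monic_X_sub_C a) (monic_X_sub_C b),
    Polynomial.Monic.natDegree_pow (monic_X_sub_C e)]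
  simp

lemma stmt17_aeval_expand {n : ℕ} (f : Polynomial ℂ) (hf : f.Monic) (hdeg : f.natDegree = n)
    (Y : Matrix (Fin 2) (Fin 2) ℂ) :
    aeval Y f = Y ^ n + ∑ i : Fin n, (f.coeff (i : ℕ)) • Y ^ (i : ℕ) := by
  conv_lhs => rw [f.as_sum_range' (n + 1) (by omega)]
  rw [map_sum, Finset.sum_range_succ]
  have hc : f.coeff n = 1 := by rw [← hdeg]; exact hf.coeff_natDegree
  have hmono : ∀ k : ℕ, (aeval Y) (monomial k (f.coeff k)) = f.coeff k • Y ^ k := by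
    intro k
    rw [aeval_monomial, Algebra.algebraMap_eq_smul_one, smul_mul_assoc, one_mul]
  simp only [hmono, hc, one_smul]
  rw [add_comm, Fin.sum_univ_eq_sum_range (fun i => f.coeff i • Y ^ i) n]
  simp [aeval_monomial, Algebra.algebraMap_eq_smul_one, smul_mul_assoc]

lemma stmt17_inj4 (x y z w : ℂ) (h1 : x ≠ y) (h2 : x ≠ z) (h3 : x ≠ w)
    (h4 : y ≠ z) (h5 : y ≠ w) (h6 : z ≠ w) :
    Function.Injective (![x, y, z, w] : Fin 4 → ℂ) := by
  intro a b h
  fin_cases a <;> fin_cases b <;> simp_all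

lemma stmt17_roots (a b c e x : ℂ) {m : ℕ} (hm : m ≠ 0) :
    (x-a)*(x-b)*(x-c)*(x-e)^m = 0 ↔ (x = a ∨ x = b ∨ x = c ∨ x = e) := by
  rw [mul_eq_zero, mul_eq_zero, mul_eq_zero, pow_eq_zero_iff hm, sub_eq_zero, sub_eq_zero,
    sub_eq_zero, sub_eq_zero]
  tauto

theorem stmt17 (n : ℕ) (hn : 4 ≤ n) (A : Fin n → Matrix (Fin 2) (Fin 2) ℂ)
    (hA : (Polynomial.X : Polynomial ℂ) ^ n • (1 : Matrix (Fin 2) (Fin 2) (Polynomial ℂ)) +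
        ∑ i : Fin n, (Polynomial.X : Polynomial ℂ) ^ (i : ℕ) • (A i).map Polynomial.C =
      Matrix.diagonal
        ![(Polynomial.X - 3) * (Polynomial.X + 3) *
            (Polynomial.X - 1) * (Polynomial.X + 1) ^ (n - 3),
          (Polynomial.X - 4) * (Polynomial.X + 4) *
            (Polynomial.X - 2) * (Polynomial.X + 2) ^ (n - 3)]) :
    Nat.card {X : Matrix (Fin 2) (Fin 2) ℂ |
        X ^ n + ∑ i : Fin n, A i * X ^ (i : ℕ) = 0} = 16 ∧
    ∀ X : Matrix (Fin 2) (Fin 2) ℂ, X ^ n + ∑ i : Fin n, A i * X ^ (i : ℕ) = 0 →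
      ∃ P : Matrix (Fin 2) (Fin 2) ℂ, IsUnit P.det ∧ (P⁻¹ * X * P).IsDiag := by
  have hm3 : n - 3 ≠ 0 := by omega
  set Pp : Polynomial ℂ := (X - C 3) * (X - C (-3)) * (X - C 1) * (X - C (-1)) ^ (n-3) with hPpdef
  set Qq : Polynomial ℂ := (X - C 4) * (X - C (-4)) * (X - C 2) * (X - C (-2)) ^ (n-3) with hQqdef
  clear_value Pp Qq
  have hPnum : (X - 3 : Polynomial ℂ) * (X + 3) * (X - 1) * (X + 1) ^ (n-3) = Pp := by
    rw [hPpdef]; simp only [map_neg, Polynomial.C_1, map_ofNat, sub_neg_eq_add]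
  have hQnum : (X - 4 : Polynomial ℂ) * (X + 4) * (X - 2) * (X + 2) ^ (n-3) = Qq := by
    rw [hQqdef]; simp only [map_neg, Polynomial.C_1, map_ofNat, sub_neg_eq_add]
  rw [hPnum, hQnum] at hA
  -- extract coefficients of A
  have hAent : ∀ (j : Fin n) (k l : Fin 2),
      A j k l = (Matrix.diagonal ![Pp, Qq] k l).coeff (j : ℕ) := by
    intro j k l
    have h1 : (X : Polynomial ℂ) ^ n * (1 : Matrix (Fin 2) (Fin 2) (Polynomial ℂ)) k l +
        ∑ i : Fin n, (X : Polynomial ℂ) ^ (i : ℕ) * C (A i k l) =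
        Matrix.diagonal ![Pp, Qq] k l := by
      have h0 := congrFun (congrFun hA k) l
      simpa [Matrix.add_apply, Matrix.sum_apply, Matrix.smul_apply, smul_eq_mul,
        Matrix.map_apply] using h0
    have h2 := congrArg (fun p => Polynomial.coeff p (j : ℕ)) h1
    simp only [Polynomial.coeff_add, Polynomial.finset_sum_coeff] at h2
    have h3 : ((X : Polynomial ℂ) ^ n * (1 : Matrix (Fin 2) (Fin 2) (Polynomial ℂ)) k l).coeff (j : ℕ) = 0 := by
      rw [Matrix.one_apply]
      split_ifs
      · rw [mul_one, Polynomial.coeff_X_pow]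
        have : (j : ℕ) ≠ n := by omega
        simp [this]
      · simp
    have h4 : ∀ i : Fin n, ((X : Polynomial ℂ) ^ (i : ℕ) * C (A i k l)).coeff (j : ℕ) =
        if j = i then A i k l else 0 := by
      intro i
      rw [mul_comm, Polynomial.coeff_C_mul, Polynomial.coeff_X_pow]
      by_cases hji : j = i
      · subst hji; simp
      · have hne : (j:ℕ) ≠ (i:ℕ) := fun hh => hji (Fin.val_injective hh)
        simp [hji, hne]
    rw [h3, zero_add] at h2
    simp only [h4] at h2
    rwa [Finset.sum_ite_eq, if_pos (Finset.mem_univ j)] at h2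
  have hAdiag : ∀ j : Fin n,
      A j = Matrix.diagonal ![Pp.coeff (j : ℕ), Qq.coeff (j : ℕ)] := by
    intro j
    ext k l
    rw [hAent j k l]
    fin_cases k <;> fin_cases l <;> simp [Matrix.diagonal]
  -- degrees
  have hPmon : Pp.Monic := by rw [hPpdef]; exact stmt17_monic 3 (-3) 1 (-1) (n-3)
  have hQmon : Qq.Monic := by rw [hQqdef]; exact stmt17_monic 4 (-4) 2 (-2) (n-3)
  have hPdeg : Pp.natDegree = n := by rw [hPpdef, stmt17_natDegree]; omega
  have hQdeg : Qq.natDegree = n := by rw [hQqdef, stmt17_natDegree]; omega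
  -- rows bridge
  have hrowsP : ∀ Y : Matrix (Fin 2) (Fin 2) ℂ,
      (Y ^ n + ∑ i : Fin n, A i * Y ^ (i : ℕ)) 0 = (aeval Y Pp) 0 := by
    intro Y
    rw [stmt17_aeval_expand Pp hPmon hPdeg Y]
    funext l
    simp [Matrix.add_apply, Matrix.sum_apply, hAdiag, Matrix.diagonal_mul,
      Matrix.smul_apply, smul_eq_mul]
  have hrowsQ : ∀ Y : Matrix (Fin 2) (Fin 2) ℂ,
      (Y ^ n + ∑ i : Fin n, A i * Y ^ (i : ℕ)) 1 = (aeval Y Qq) 1 := by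
    intro Y
    rw [stmt17_aeval_expand Qq hQmon hQdeg Y]
    funext l
    simp [Matrix.add_apply, Matrix.sum_apply, hAdiag, Matrix.diagonal_mul,
      Matrix.smul_apply, smul_eq_mul]
  have hchar : ∀ Y : Matrix (Fin 2) (Fin 2) ℂ,
      (Y ^ n + ∑ i : Fin n, A i * Y ^ (i : ℕ) = 0) ↔
      ((aeval Y Pp) 0 = 0 ∧ (aeval Y Qq) 1 = 0) := by
    intro Y
    constructor
    · intro h
      constructor
      · rw [← hrowsP Y, h]; rfl
      · rw [← hrowsQ Y, h]; rfl
    · rintro ⟨h0, h1⟩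
      funext k l
      fin_cases k
      · exact (congrFun (hrowsP Y) l).trans (congrFun h0 l)
      · exact (congrFun (hrowsQ Y) l).trans (congrFun h1 l)
  -- eval formulas
  have hevalP : ∀ x : ℂ, Pp.eval x = (x-3)*(x-(-3))*(x-1)*(x-(-1))^(n-3) := by
    intro x; simp [hPpdef]
  have hevalQ : ∀ x : ℂ, Qq.eval x = (x-4)*(x-(-4))*(x-2)*(x-(-2))^(n-3) := by
    intro x; simp [hQqdef]
  -- solutions as a range
  set g : Fin 4 × Fin 4 → Matrix (Fin 2) (Fin 2) ℂ :=
    fun ij => Matrix.diagonal ![![(3:ℂ),-3,1,-1] ij.1, ![(4:ℂ),-4,2,-2] ij.2] with hgdef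
  have hrow' : ∀ (Y : Matrix (Fin 2) (Fin 2) ℂ), Y 0 1 = 0 →
      Y 0 = Y 0 0 • (Pi.single 0 1 : Fin 2 → ℂ) := by
    intro Y hb; funext l; fin_cases l <;> simp [hb]
  have hrow'' : ∀ (Y : Matrix (Fin 2) (Fin 2) ℂ), Y 1 0 = 0 →
      Y 1 = Y 1 1 • (Pi.single 1 1 : Fin 2 → ℂ) := by
    intro Y hc; funext l; fin_cases l <;> simp [hc]
  have hco : IsCoprime Pp Qq := by rw [hPpdef, hQqdef]; exact stmt17_coprime (n - 3)
  obtain ⟨s, t, hst⟩ := hco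
  have hSrange : {Y : Matrix (Fin 2) (Fin 2) ℂ |
      Y ^ n + ∑ i : Fin n, A i * Y ^ (i : ℕ) = 0} = Set.range g := by
    ext Y
    simp only [Set.mem_setOf_eq, Set.mem_range]
    rw [hchar Y]
    constructor
    · rintro ⟨h0, h1⟩
      by_cases hb : Y 0 1 = 0
      · by_cases hc : Y 1 0 = 0
        · -- diagonal case
          have hPa : Pp.eval (Y 0 0) = 0 := by
            have hr := stmt17_row_aeval (hrow' Y hb) Pp
            rw [h0] at hr
            simpa using (congrFun hr 0).symm
          have hQd : Qq.eval (Y 1 1) = 0 := by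
            have hr := stmt17_row_aeval (hrow'' Y hc) Qq
            rw [h1] at hr
            simpa using (congrFun hr 1).symm
          rw [hevalP, stmt17_roots 3 (-3) 1 (-1) (Y 0 0) hm3] at hPa
          rw [hevalQ, stmt17_roots 4 (-4) 2 (-2) (Y 1 1) hm3] at hQd
          obtain ⟨i, hi⟩ : ∃ i : Fin 4, Y 0 0 = ![(3:ℂ),-3,1,-1] i := by
            rcases hPa with h|h|h|h
            exacts [⟨0, by simpa using h⟩, ⟨1, by simpa using h⟩,
              ⟨2, by simpa using h⟩, ⟨3, by simpa using h⟩]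
          obtain ⟨j, hj⟩ : ∃ j : Fin 4, Y 1 1 = ![(4:ℂ),-4,2,-2] j := by
            rcases hQd with h|h|h|h
            exacts [⟨0, by simpa using h⟩, ⟨1, by simpa using h⟩,
              ⟨2, by simpa using h⟩, ⟨3, by simpa using h⟩]
          refine ⟨(i, j), ?_⟩
          funext k l
          fin_cases k <;> fin_cases l <;>
            simp [hgdef, Matrix.diagonal_apply, hb, hc, hi, hj]
        · -- Y 0 1 = 0, Y 1 0 ≠ 0 : contradiction
          exfalso
          obtain ⟨u', v', hQ⟩ := stmt17_exists_linear Y Qq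
          have h10 := congrFun h1 0
          rw [hQ] at h10
          simp [Matrix.add_apply, Matrix.smul_apply, Matrix.one_apply, smul_eq_mul] at h10
          have hu' : u' = 0 := h10.resolve_right hc
          have h11 := congrFun h1 1
          rw [hQ] at h11
          simp [Matrix.add_apply, Matrix.smul_apply, Matrix.one_apply, smul_eq_mul, hu'] at h11
          have hQ0 : aeval Y Qq = 0 := by rw [hQ, hu', h11]; simp
          have hQa : Qq.eval (Y 0 0) = 0 := by
            have hr := stmt17_row_aeval (hrow' Y hb) Qq
            rw [hQ0] at hr
            simpa using (congrFun hr 0).symm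
          have hPa : Pp.eval (Y 0 0) = 0 := by
            have hr := stmt17_row_aeval (hrow' Y hb) Pp
            rw [h0] at hr
            simpa using (congrFun hr 0).symm
          have hev := congrArg (Polynomial.eval (Y 0 0)) hst
          rw [eval_add, eval_mul, eval_mul, hPa, hQa, mul_zero, mul_zero, add_zero,
            eval_one] at hev
          exact zero_ne_one hev
      · by_cases hc : Y 1 0 = 0
        · -- Y 0 1 ≠ 0, Y 1 0 = 0 : contradiction
          exfalso
          obtain ⟨u, v, hP⟩ := stmt17_exists_linear Y Pp
          have h01 := congrFun h0 1
          rw [hP] at h01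
          simp [Matrix.add_apply, Matrix.smul_apply, Matrix.one_apply, smul_eq_mul] at h01
          have hu : u = 0 := h01.resolve_right hb
          have h00 := congrFun h0 0
          rw [hP] at h00
          simp [Matrix.add_apply, Matrix.smul_apply, Matrix.one_apply, smul_eq_mul, hu] at h00
          have hP0 : aeval Y Pp = 0 := by rw [hP, hu, h00]; simp
          have hPd : Pp.eval (Y 1 1) = 0 := by
            have hr := stmt17_row_aeval (hrow'' Y hc) Pp
            rw [hP0] at hr
            simpa using (congrFun hr 1).symm
          have hQd : Qq.eval (Y 1 1) = 0 := by
            have hr := stmt17_row_aeval (hrow'' Y hc) Qq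
            rw [h1] at hr
            simpa using (congrFun hr 1).symm
          have hev := congrArg (Polynomial.eval (Y 1 1)) hst
          rw [eval_add, eval_mul, eval_mul, hPd, hQd, mul_zero, mul_zero, add_zero,
            eval_one] at hev
          exact zero_ne_one hev
        · -- both off-diagonal entries nonzero : contradiction
          exfalso
          obtain ⟨u, v, hP⟩ := stmt17_exists_linear Y Pp
          have h01 := congrFun h0 1
          rw [hP] at h01
          simp [Matrix.add_apply, Matrix.smul_apply, Matrix.one_apply, smul_eq_mul] at h01
          have hu : u = 0 := h01.resolve_right hb
          have h00 := congrFun h0 0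
          rw [hP] at h00
          simp [Matrix.add_apply, Matrix.smul_apply, Matrix.one_apply, smul_eq_mul, hu] at h00
          have hP0 : aeval Y Pp = 0 := by rw [hP, hu, h00]; simp
          obtain ⟨u', v', hQ⟩ := stmt17_exists_linear Y Qq
          have h10 := congrFun h1 0
          rw [hQ] at h10
          simp [Matrix.add_apply, Matrix.smul_apply, Matrix.one_apply, smul_eq_mul] at h10
          have hu' : u' = 0 := h10.resolve_right hc
          have h11 := congrFun h1 1
          rw [hQ] at h11
          simp [Matrix.add_apply, Matrix.smul_apply, Matrix.one_apply, smul_eq_mul, hu'] at h11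
          have hQ0 : aeval Y Qq = 0 := by rw [hQ, hu', h11]; simp
          have hev := congrArg (aeval Y) hst
          rw [map_add, _root_.map_mul, _root_.map_mul, hP0, hQ0, mul_zero, mul_zero,
            add_zero, _root_.map_one] at hev
          exact one_ne_zero hev.symm
    · rintro ⟨⟨i, j⟩, rfl⟩
      have hb : g (i, j) 0 1 = 0 := by simp [hgdef, Matrix.diagonal_apply]
      have hc : g (i, j) 1 0 = 0 := by simp [hgdef, Matrix.diagonal_apply]
      have ha : g (i, j) 0 0 = ![(3:ℂ),-3,1,-1] i := by simp [hgdef, Matrix.diagonal_apply]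
      have hd : g (i, j) 1 1 = ![(4:ℂ),-4,2,-2] j := by simp [hgdef, Matrix.diagonal_apply]
      constructor
      · rw [stmt17_row_aeval (hrow' _ hb) Pp, ha]
        have : Pp.eval (![(3:ℂ),-3,1,-1] i) = 0 := by
          rw [hevalP]
          fin_cases i <;> norm_num [zero_pow hm3]
        rw [this, zero_smul]
      · rw [stmt17_row_aeval (hrow'' _ hc) Qq, hd]
        have : Qq.eval (![(4:ℂ),-4,2,-2] j) = 0 := by
          rw [hevalQ]
          fin_cases j <;> norm_num [zero_pow hm3]
        rw [this, zero_smul]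
  have hg_inj : Function.Injective g := by
    rintro ⟨i, j⟩ ⟨i', j'⟩ h
    have h00 : (![(3:ℂ),-3,1,-1] i) = ![(3:ℂ),-3,1,-1] i' := by
      have h' := congrFun (congrFun h 0) 0
      simpa [hgdef, Matrix.diagonal_apply] using h'
    have h11 : (![(4:ℂ),-4,2,-2] j) = ![(4:ℂ),-4,2,-2] j' := by
      have h' := congrFun (congrFun h 1) 1
      simpa [hgdef, Matrix.diagonal_apply] using h'
    have hi : i = i' := stmt17_inj4 3 (-3) 1 (-1) (by norm_num) (by norm_num) (by norm_num)
      (by norm_num) (by norm_num) (by norm_num) h00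
    have hj : j = j' := stmt17_inj4 4 (-4) 2 (-2) (by norm_num) (by norm_num) (by norm_num)
      (by norm_num) (by norm_num) (by norm_num) h11
    exact Prod.ext hi hj
  constructor
  · rw [hSrange, Nat.card_range_of_injective hg_inj]
    simp [Nat.card_eq_fintype_card]
  · intro Y hY
    have : Y ∈ Set.range g := hSrange ▸ hY
    obtain ⟨ij, rfl⟩ := this
    exact ⟨1, by simp, by
      rw [inv_one, one_mul, mul_one]
      exact Matrix.isDiag_diagonal _⟩
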